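/- Let T₁ = S₁ ∘ S₂ ∘ … ∘ S_{ℓ₁} be the concatenation of ℓ₁ strings and T₂ = S'₁ ∘ S'₂ ∘ … ∘ S'_{ℓ₂} the concatenation of ℓ₂ strings over a common alphabet. If there is an integer t such that LCS(S_i, S'_j) ≤ t for all 1 ≤ i ≤ ℓ₁ and 1 ≤ j ≤ ℓ₂, then LCS(T₁, T₂) ≤ (ℓ₁ + ℓ₂)·t. -/

import Mathlib

/-- The length of a longest common subsequence of two strings (lists). -/
noncomputable def lcsLen {α : Type*} (S T : List α) : ℕ :=
  sSup {n | ∃ U : List α, U.length = n ∧ U.Sublist S ∧ U.Sublist T}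

/-- The edit distance (insertions/deletions) between two strings, via
`ED(S,T) = |S| + |T| - 2·LCS(S,T)`. -/
noncomputable def editDistance {α : Type*} (S T : List α) : ℕ :=
  S.length + T.length - 2 * lcsLen S T

/-- `strSlice S a b` is the substring `S[a, b)` of `S` (1-indexed, `b` excluded). -/
def strSlice {α : Type*} (S : List α) (a b : ℕ) : List α :=
  (S.drop (a - 1)).take (b - a)

/-- `islice f a b` is the substring `f[a, b)` of the infinite string `f`
(1-indexed, `b` excluded). -/
def islice {α : Type*} (f : ℕ → α) (a b : ℕ) : List α :=
  (List.range (b - a)).map fun t => f (a + t)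

/-- `S` is an ε-synchronization string: for all `1 ≤ i < j < k ≤ |S| + 1`,
`ED(S[i,j), S[j,k)) > (1-ε)(k-i)`. -/
def IsSyncString {α : Type*} (ε : ℝ) (S : List α) : Prop :=
  ∀ i j k : ℕ, 1 ≤ i → i < j → j < k → k ≤ S.length + 1 →
    (1 - ε) * ((k : ℝ) - (i : ℝ)) < (editDistance (strSlice S i j) (strSlice S j k) : ℝ)

/-- `S` is an ε-synchronization circle: every cyclic rotation of `S` is an
ε-synchronization string. -/
def IsSyncCircle {α : Type*} (ε : ℝ) (S : List α) : Prop :=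
  ∀ i : ℕ, 1 ≤ i → i ≤ S.length → IsSyncString ε (S.rotate (i - 1))

/-- An infinite ε-synchronization string (1-indexed). -/
def IsInfSyncString {α : Type*} (ε : ℝ) (f : ℕ → α) : Prop :=
  ∀ i j k : ℕ, 1 ≤ i → i < j → j < k →
    (1 - ε) * ((k : ℝ) - (i : ℝ)) < (editDistance (islice f i j) (islice f j k) : ℝ)

/-- `S` is a `c`-long-distance ε-synchronization string: for all
`1 ≤ i < j ≤ i' < j' ≤ |S| + 1` with `l = (j-i)+(j'-i')`, if the two intervals
are adjacent (`i' = j`) or `l > c · log |S|`, then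
`ED(S[i,j), S[i',j')) > (1-ε)·l`. -/
noncomputable def IsLongDistSyncString {α : Type*} (c ε : ℝ) (S : List α) : Prop :=
  ∀ i j i' j' : ℕ, 1 ≤ i → i < j → j ≤ i' → i' < j' → j' ≤ S.length + 1 →
    (i' = j ∨ c * Real.log (S.length : ℝ) < ((j : ℝ) - i) + ((j' : ℝ) - i')) →
    (1 - ε) * (((j : ℝ) - i) + ((j' : ℝ) - i')) <
      (editDistance (strSlice S i j) (strSlice S i' j') : ℝ)

/-- An infinite weak ε-synchronization string: for all `1 ≤ i < j < k`,
`ED(S[i,j), S[j,k)) ≥ ⌊(1-ε)(k-i)⌋`. -/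
def IsInfWeakSyncString {α : Type*} (ε : ℝ) (f : ℕ → α) : Prop :=
  ∀ i j k : ℕ, 1 ≤ i → i < j → j < k →
    ((⌊(1 - ε) * ((k : ℝ) - (i : ℝ))⌋ : ℤ) : ℝ) ≤
      (editDistance (islice f i j) (islice f j k) : ℝ)

/-- If `T₁` is a concatenation of `ℓ₁` strings, `T₂` is a
concatenation of `ℓ₂` strings, and each pair of pieces has LCS at most `t`,
then `LCS(T₁, T₂) ≤ (ℓ₁ + ℓ₂)·t`. -/
lemma lcsLen_le' {α : Type*} {S T : List α} {n : ℕ}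
    (h : ∀ U : List α, U.Sublist S → U.Sublist T → U.length ≤ n) :
    lcsLen S T ≤ n := by
  refine csSup_le ⟨0, [], rfl, List.nil_sublist _, List.nil_sublist _⟩ ?_
  rintro b ⟨U, rfl, h1, h2⟩
  exact h U h1 h2

lemma le_lcsLen' {α : Type*} {U S T : List α}
    (h1 : U.Sublist S) (h2 : U.Sublist T) : U.length ≤ lcsLen S T := by
  refine le_csSup ⟨S.length, ?_⟩ ⟨U, rfl, h1, h2⟩
  rintro b ⟨V, rfl, hb1, _⟩
  exact hb1.length_le

lemma lcs_key {α : Type*} (t : ℕ) : ∀ (n : ℕ) (L1 L2 : List (List α)),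
    L1.length + L2.length ≤ n →
    (∀ A ∈ L1, ∀ B ∈ L2, lcsLen A B ≤ t) →
    lcsLen L1.flatten L2.flatten ≤ (L1.length + L2.length) * t := by
  intro n
  induction n with
  | zero =>
    intro L1 L2 hn _
    have h1 : L1 = [] := List.length_eq_zero_iff.mp (by omega)
    subst h1
    apply lcsLen_le'
    intro U hU _
    simpa using List.sublist_nil.mp (by simpa using hU) ▸ (by simp : ([] : List α).length ≤ _)
  | succ m ih =>
    intro L1 L2 hn hLCS
    match L1, L2 with
    | [], L2 =>
      apply lcsLen_le'
      intro U hU _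
      simp at hU
      simp [hU]
    | L1, [] =>
      apply lcsLen_le'
      intro U _ hU
      simp at hU
      simp [hU]
    | A :: L1', B :: L2' =>
      apply lcsLen_le'
      intro U hU1 hU2
      rw [List.flatten_cons] at hU1 hU2
      obtain ⟨V, W, hVW, hVA, hWrest⟩ := List.sublist_append_iff.mp hU1
      obtain ⟨V', W', hVW', hVB, hWrest'⟩ := List.sublist_append_iff.mp hU2
      have heq : V ++ W = V' ++ W' := hVW ▸ hVW'
      rcases List.append_eq_append_iff.mp heq with ⟨X, hX1, hX2⟩ | ⟨X, hX1, hX2⟩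
      · -- V' = V ++ X, W = X ++ W' : V common to A,B ; W common to L1'.flatten, L2.flatten
        have hVB' : V.Sublist B := ((List.sublist_append_left V X).trans (hX1 ▸ List.Sublist.refl _)).trans hVB
        have hVt : V.length ≤ t := le_trans (le_lcsLen' hVA hVB') (hLCS A (by simp) B (by simp))
        have hW2 : W.Sublist (B :: L2').flatten := by
          have : W.Sublist U := hVW ▸ List.sublist_append_right V W
          exact this.trans hU2
        have hWb : W.length ≤ (L1'.length + (B :: L2').length) * t := by
          refine le_trans (le_lcsLen' hWrest hW2) (ih L1' (B :: L2') (by simp at hn ⊢; omega) ?_)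
          intro A' hA' B' hB'
          exact hLCS A' (by simp [hA']) B' hB'
        have : U.length = V.length + W.length := by rw [hVW]; simp
        simp only [List.length_cons] at *
        calc U.length = V.length + W.length := this
          _ ≤ t + (L1'.length + (L2'.length + 1)) * t := by omega
          _ ≤ (L1'.length + 1 + (L2'.length + 1)) * t := by ring_nf; omega
      · -- V = V' ++ X, W' = X ++ W : symmetric
        have hVA' : V'.Sublist A := ((List.sublist_append_left V' X).trans (hX1 ▸ List.Sublist.refl _)).trans hVA
        have hVt : V'.length ≤ t := le_trans (le_lcsLen' hVA' hVB) (hLCS A (by simp) B (by simp))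
        have hW1 : W'.Sublist (A :: L1').flatten := by
          have : W'.Sublist U := hVW' ▸ List.sublist_append_right V' W'
          exact this.trans hU1
        have hWb : W'.length ≤ ((A :: L1').length + L2'.length) * t := by
          refine le_trans (le_lcsLen' hW1 hWrest') (ih (A :: L1') L2' (by simp at hn ⊢; omega) ?_)
          intro A' hA' B' hB'
          exact hLCS A' hA' B' (by simp [hB'])
        have : U.length = V'.length + W'.length := by rw [hVW']; simp
        simp only [List.length_cons] at *
        calc U.length = V'.length + W'.length := this
          _ ≤ t + (L1'.length + 1 + L2'.length) * t := by omega
          _ ≤ (L1'.length + 1 + (L2'.length + 1)) * t := by ring_nf; omega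

theorem lcs_concat_le {α : Type*} (ℓ₁ ℓ₂ t : ℕ)
    (S : Fin ℓ₁ → List α) (S' : Fin ℓ₂ → List α)
    (h : ∀ (i : Fin ℓ₁) (j : Fin ℓ₂), lcsLen (S i) (S' j) ≤ t) :
    lcsLen (List.ofFn S).flatten (List.ofFn S').flatten ≤ (ℓ₁ + ℓ₂) * t := by
  have := lcs_key t (ℓ₁ + ℓ₂) (List.ofFn S) (List.ofFn S') (by simp) ?_
  · simpa using this
  · intro A hA B hB
    obtain ⟨i, rfl⟩ := List.mem_ofFn.mp hA
    obtain ⟨j, rfl⟩ := List.mem_ofFn.mp hB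
    exact h i j
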